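/- arXiv:1404.2196 — 4 statements merged into one kernel-verified Lean document; each statement's English description precedes it below -/
import Mathlib

section
/- For every positive integer j, the identity (∑_{m=0}^{2j-2} (-1)^m * C(4j, 2m+1) * (2m+1)! * (4j-2m-3)! / (m! * (2j)! * (2j-m-2)! * 2^{4j-2})) - (4j)! / ((2j-1)! * (2j)! * 2^{4j-1}) = -1 holds. -/
open Finset

lemma lemA : ∀ (n : ℕ) (a : ℚ), (∀ i : ℕ, i ≤ n → a + i ≠ 0) →
    ∑ k ∈ range (n+1), (-1:ℚ)^k * (n.choose k) / ((k:ℚ) + a)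
      = n.factorial / ∏ i ∈ range (n+1), (a + i) := by
  intro n
  induction n with
  | zero => intro a ha; simp
  | succ n ih =>
    intro a ha
    have ha0 : a ≠ 0 := by simpa using ha 0 (Nat.zero_le _)
    have ha' : ∀ i : ℕ, i ≤ n → (a+1) + i ≠ 0 := by
      intro i hi h
      exact ha (i+1) (by omega) (by push_cast; linarith)
    have haa : ∀ i : ℕ, i ≤ n → a + i ≠ 0 := fun i hi => ha i (by omega)
    have key : ∑ k ∈ range (n+2), (-1:ℚ)^k * ((n+1).choose k) / ((k:ℚ) + a)
        = (∑ k ∈ range (n+2), (-1:ℚ)^k * (n.choose k) / ((k:ℚ) + a))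
          - ∑ k ∈ range (n+1), (-1:ℚ)^k * (n.choose k) / ((k:ℚ) + (a+1)) := by
      rw [Finset.sum_range_succ' (fun k => (-1:ℚ)^k * ((n+1).choose k) / ((k:ℚ) + a)) (n+1),
          Finset.sum_range_succ' (fun k => (-1:ℚ)^k * (n.choose k) / ((k:ℚ) + a)) (n+1)]
      have hEq : ∑ x ∈ range (n+1), (-1:ℚ)^(x+1) * ((n+1).choose (x+1)) / (((x+1:ℕ):ℚ) + a)
          = (∑ x ∈ range (n+1), (-1:ℚ)^(x+1) * (n.choose (x+1)) / (((x+1:ℕ):ℚ) + a))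
            - ∑ x ∈ range (n+1), (-1:ℚ)^x * (n.choose x) / ((x:ℚ) + (a+1)) := by
        rw [← Finset.sum_sub_distrib]
        apply Finset.sum_congr rfl
        intro k _
        rw [Nat.choose_succ_succ]
        push_cast
        ring
      rw [hEq]
      simp [Nat.choose_zero_right]
      ring
    have step1 : ∑ k ∈ range (n+2), (-1:ℚ)^k * (n.choose k) / ((k:ℚ) + a)
        = ∑ k ∈ range (n+1), (-1:ℚ)^k * (n.choose k) / ((k:ℚ) + a) := by
      rw [Finset.sum_range_succ]
      simp [Nat.choose_succ_self]
    rw [key, step1, ih a haa, ih (a+1) ha']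
    have hP : (∏ i ∈ range (n+1), (a + (i:ℚ))) ≠ 0 :=
      Finset.prod_ne_zero_iff.2 (fun i hi => haa i (by have := Finset.mem_range.mp hi; omega))
    have hP' : (∏ i ∈ range (n+1), (a + 1 + (i:ℚ))) ≠ 0 :=
      Finset.prod_ne_zero_iff.2 (fun i hi => ha' i (by have := Finset.mem_range.mp hi; omega))
    have hQ : (∏ i ∈ range (n+2), (a + (i:ℚ))) ≠ 0 :=
      Finset.prod_ne_zero_iff.2 (fun i hi => ha i (by have := Finset.mem_range.mp hi; omega))
    have e1 : ∏ i ∈ range (n+1), (a + 1 + (i:ℚ)) = ∏ i ∈ range (n+1), (a + (i:ℚ) + 1) := by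
      apply Finset.prod_congr rfl; intros; ring
    have e2 : ∏ i ∈ range (n+2), (a + (i:ℚ)) = (∏ i ∈ range (n+1), (a + (i:ℚ) + 1)) * a := by
      rw [Finset.prod_range_succ' (fun i => a + (i:ℚ)) (n+1)]
      congr 1
      · apply Finset.prod_congr rfl; intros; push_cast; ring
      · simp
    have e3 : ∏ i ∈ range (n+2), (a + (i:ℚ)) = (∏ i ∈ range (n+1), (a + (i:ℚ))) * (a + ((n:ℚ)+1)) := by
      rw [Finset.prod_range_succ]
      push_cast
      ring
    rw [Nat.factorial_succ]
    push_cast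
    rw [div_sub_div _ _ hP hP', div_eq_div_iff (mul_ne_zero hP hP') hQ, e1]
    linear_combination (n.factorial : ℚ) * (∏ i ∈ range (n+1), (a + (i:ℚ) + 1)) * e3
      - (n.factorial : ℚ) * (∏ i ∈ range (n+1), (a + (i:ℚ))) * e2

lemma lemB (n : ℕ) : ∏ i ∈ range (n+1), ((1:ℚ)/2 + i)
    = ((2*n+1).factorial : ℚ) / (2^(2*n+1) * n.factorial) := by
  induction n with
  | zero => norm_num
  | succ n ih =>
    rw [Finset.prod_range_succ, ih]
    have h1 : (2*(n+1)+1) = (2*n+1) + 2 := by ring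
    have hfs : ((2*n+1)+2).factorial = ((2*n+1)+2) * (((2*n+1)+1) * (2*n+1).factorial) := by
      rw [Nat.factorial_succ, Nat.factorial_succ]
    rw [h1, hfs, Nat.factorial_succ n, pow_add]
    have hf : ((2*n+1).factorial : ℚ) ≠ 0 := Nat.cast_ne_zero.2 (Nat.factorial_ne_zero _)
    have hnf : ((n).factorial : ℚ) ≠ 0 := Nat.cast_ne_zero.2 (Nat.factorial_ne_zero _)
    have hp : (2:ℚ)^(2*n+1) ≠ 0 := by positivity
    push_cast
    field_simp
    ring

lemma lemC (n : ℕ) : ∑ k ∈ range (n+1), (-1:ℚ)^k * (n.choose k) / (2*(k:ℚ)+1)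
    = 4^n * ((n.factorial:ℚ))^2 / ((2*n+1).factorial : ℚ) := by
  have h2 : ∀ i : ℕ, i ≤ n → (1/2:ℚ) + i ≠ 0 := by intro i _; positivity
  have hA := lemA n (1/2) h2
  have hs : ∑ k ∈ range (n+1), (-1:ℚ)^k * (n.choose k) / (2*(k:ℚ)+1)
      = (∑ k ∈ range (n+1), (-1:ℚ)^k * (n.choose k) / ((k:ℚ)+1/2)) / 2 := by
    rw [Finset.sum_div]
    apply Finset.sum_congr rfl
    intro k _
    rw [div_div]
    congr 1
    ring
  rw [hs, hA, lemB n]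
  have hf : ((2*n+1).factorial : ℚ) ≠ 0 := Nat.cast_ne_zero.2 (Nat.factorial_ne_zero _)
  have hnf : ((n).factorial : ℚ) ≠ 0 := Nat.cast_ne_zero.2 (Nat.factorial_ne_zero _)
  have hpow : (2:ℚ)^(2*n+1) = 2 * 4^n := by
    rw [pow_succ, pow_mul]; norm_num; ring
  rw [hpow]
  field_simp

theorem combinatorial_identity (j : ℕ) (hj : 0 < j) :
    (∑ m ∈ Finset.range (2 * j - 1),
        (-1 : ℚ) ^ m * (Nat.choose (4 * j) (2 * m + 1)) *
          ((Nat.factorial (2 * m + 1)) * (Nat.factorial (4 * j - 2 * m - 3)) /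
            ((Nat.factorial m) * (Nat.factorial (2 * j)) *
              (Nat.factorial (2 * j - m - 2)) * 2 ^ (4 * j - 2))))
      - (Nat.factorial (4 * j) : ℚ) /
          ((Nat.factorial (2 * j - 1)) * (Nat.factorial (2 * j)) * 2 ^ (4 * j - 1))
      = -1 := by
  obtain ⟨k, rfl⟩ : ∃ k, j = k + 1 := ⟨j - 1, by omega⟩
  -- the closed form of each summand
  set g : ℕ → ℚ := fun m => (-1:ℚ)^m * ((4*k+4).factorial : ℚ) /
      (2^(4*k+3) * ((2*(2*k+1-m)+1 : ℕ) : ℚ) * (m.factorial : ℚ) *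
        ((2*k+2).factorial : ℚ) * (((2*k+1-m).factorial : ℚ))) with hg
  -- Step A: rewrite each summand
  have stepA : ∑ m ∈ Finset.range (2 * (k+1) - 1),
      (-1 : ℚ) ^ m * (Nat.choose (4 * (k+1)) (2 * m + 1)) *
        ((Nat.factorial (2 * m + 1)) * (Nat.factorial (4 * (k+1) - 2 * m - 3)) /
          ((Nat.factorial m) * (Nat.factorial (2 * (k+1))) *
            (Nat.factorial (2 * (k+1) - m - 2)) * 2 ^ (4 * (k+1) - 2)))
      = ∑ m ∈ Finset.range (2*k+1), g m := by
    rw [show 2 * (k+1) - 1 = 2*k+1 from by omega]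
    apply Finset.sum_congr rfl
    intro m hm
    have hm' : m < 2*k+1 := Finset.mem_range.mp hm
    obtain ⟨t, ht⟩ : ∃ t, m + t = 2*k := ⟨2*k - m, by omega⟩
    rw [show 4*(k+1) - 2*m - 3 = 2*t+1 from by omega,
        show 2*(k+1) - m - 2 = t from by omega,
        show 4*(k+1) - 2 = 4*k+2 from by omega,
        show 2*(k+1) = 2*k+2 from by omega,
        show 4*(k+1) = 4*k+4 from by omega,
        hg]
    simp only []
    rw [show 2*k+1-m = t+1 from by omega]
    have hc := Nat.choose_mul_factorial_mul_factorial (show 2*m+1 ≤ 4*k+4 by omega)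
    rw [show 4*k+4 - (2*m+1) = 2*t+3 from by omega] at hc
    have hcq : ((4*k+4).choose (2*m+1) : ℚ) * ((2*m+1).factorial : ℚ) * ((2*t+3).factorial : ℚ)
        = ((4*k+4).factorial : ℚ) := by exact_mod_cast congrArg (Nat.cast : ℕ → ℚ) hc
    have hf1 : ((2*t+3).factorial : ℚ) = (2*t+3) * ((2*t+2) * (2*t+1).factorial) := by
      rw [show 2*t+3 = (2*t+2)+1 from rfl, Nat.factorial_succ,
          show 2*t+2 = (2*t+1)+1 from rfl, Nat.factorial_succ]
      push_cast; ring
    have hf2 : ((t+1).factorial : ℚ) = (t+1) * (t.factorial) := by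
      rw [Nat.factorial_succ]; push_cast; ring
    have h2t1 : ((2*t+1).factorial : ℚ) ≠ 0 := Nat.cast_ne_zero.2 (Nat.factorial_ne_zero _)
    have hmf : ((m).factorial : ℚ) ≠ 0 := Nat.cast_ne_zero.2 (Nat.factorial_ne_zero _)
    have h2k2 : ((2*k+2).factorial : ℚ) ≠ 0 := Nat.cast_ne_zero.2 (Nat.factorial_ne_zero _)
    have htf : ((t).factorial : ℚ) ≠ 0 := Nat.cast_ne_zero.2 (Nat.factorial_ne_zero _)
    have hp1 : (2:ℚ)^(4*k+2) ≠ 0 := by positivity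
    have hp2 : (2:ℚ)^(4*k+3) ≠ 0 := by positivity
    have hpw : (2:ℚ)^(4*k+3) = 2^(4*k+2) * 2 := by rw [pow_succ]
    rw [hf1] at hcq
    push_cast [hf2, hpw]
    field_simp
    linear_combination hcq
  rw [stepA]
  -- Step B: the subtracted term is -g (2k+1)
  have hsub : (Nat.factorial (4 * (k+1)) : ℚ) /
      ((Nat.factorial (2 * (k+1) - 1)) * (Nat.factorial (2 * (k+1))) * 2 ^ (4 * (k+1) - 1))
      = - g (2*k+1) := by
    rw [hg]
    simp only []
    rw [show 2*(k+1)-1 = 2*k+1 from by omega, show 4*(k+1)-1 = 4*k+3 from by omega,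
        show 4*(k+1) = 4*k+4 from by omega, show 2*(k+1) = 2*k+2 from by omega,
        show 2*k+1-(2*k+1) = 0 from by omega]
    rw [show ((-1:ℚ)^(2*k+1)) = -1 from Odd.neg_one_pow ⟨k, by ring⟩]
    norm_num [Nat.factorial]
    ring
  rw [hsub, sub_neg_eq_add, ← Finset.sum_range_succ g (2*k+1)]
  -- Step C: reflect the sum
  rw [← Finset.sum_range_reflect g (2*k+2)]
  have stepC : ∑ i ∈ Finset.range (2*k+2), g (2*k+2-1-i)
      = (-(((4*k+4).factorial : ℚ) / (2^(4*k+3) * ((2*k+2).factorial : ℚ) * ((2*k+1).factorial : ℚ))))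
        * ∑ i ∈ Finset.range (2*k+1+1), (-1:ℚ)^i * (((2*k+1).choose i : ℕ) : ℚ) / (2*(i:ℚ)+1) := by
    rw [Finset.mul_sum]
    apply Finset.sum_congr (by norm_num)
    intro i hi
    have hi' : i < 2*k+2 := by have := Finset.mem_range.mp hi; omega
    obtain ⟨t, ht⟩ : ∃ t, i + t = 2*k+1 := ⟨2*k+1 - i, by omega⟩
    rw [show 2*k+2-1-i = t from by omega, hg]
    simp only []
    rw [show 2*k+1-t = i from by omega]
    have hch := Nat.choose_mul_factorial_mul_factorial (show i ≤ 2*k+1 by omega)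
    rw [show 2*k+1-i = t from by omega] at hch
    have hchq : (((2*k+1).choose i : ℕ) : ℚ) * (i.factorial : ℚ) * (t.factorial : ℚ)
        = ((2*k+1).factorial : ℚ) := by exact_mod_cast congrArg (Nat.cast : ℕ → ℚ) hch
    have hsign : (-1:ℚ)^t * (-1)^i = -1 := by
      rw [← pow_add, show t+i = 2*k+1 from by omega]
      exact Odd.neg_one_pow ⟨k, by ring⟩
    have hii : ((-1:ℚ)^i) * ((-1)^i) = 1 := by
      rw [← pow_add]; exact Even.neg_one_pow ⟨i, rfl⟩
    have hsign' : (-1:ℚ)^t = -(-1:ℚ)^i := by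
      linear_combination ((-1:ℚ)^i) * hsign - ((-1:ℚ)^t) * hii
    rw [hsign']
    have h1 : ((2*(2*k+1-t)+1 : ℕ) : ℚ) = 2*(i:ℚ)+1 := by
      rw [show 2*k+1-t = i from by omega]; push_cast; ring
    have h2i : (2*(i:ℚ)+1) ≠ 0 := by positivity
    have hif : ((i).factorial : ℚ) ≠ 0 := Nat.cast_ne_zero.2 (Nat.factorial_ne_zero _)
    have htf : ((t).factorial : ℚ) ≠ 0 := Nat.cast_ne_zero.2 (Nat.factorial_ne_zero _)
    have h2k2 : ((2*k+2).factorial : ℚ) ≠ 0 := Nat.cast_ne_zero.2 (Nat.factorial_ne_zero _)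
    have h2k1 : ((2*k+1).factorial : ℚ) ≠ 0 := Nat.cast_ne_zero.2 (Nat.factorial_ne_zero _)
    have hp : (2:ℚ)^(4*k+3) ≠ 0 := by positivity
    push_cast
    field_simp
    linear_combination hchq
  rw [stepC, lemC (2*k+1)]
  -- final arithmetic
  rw [show 2*(2*k+1)+1 = 4*k+3 from by omega,
      show (4*k+4).factorial = (4*k+4) * (4*k+3).factorial from Nat.factorial_succ _,
      show (2*k+2).factorial = (2*k+2) * (2*k+1).factorial from Nat.factorial_succ _]
  have h2k1 : ((2*k+1).factorial : ℚ) ≠ 0 := Nat.cast_ne_zero.2 (Nat.factorial_ne_zero _)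
  have h4k3 : ((4*k+3).factorial : ℚ) ≠ 0 := Nat.cast_ne_zero.2 (Nat.factorial_ne_zero _)
  have hpow : (4:ℚ)^(2*k+1) = 2^(4*k+2) := by
    rw [show (4:ℚ) = 2^2 by norm_num, ← pow_mul, show 2*(2*k+1) = 4*k+2 from by omega]
  have hpow2 : (2:ℚ)^(4*k+3) = 2^(4*k+2) * 2 := by rw [pow_succ]
  rw [hpow, hpow2]
  have hp : (2:ℚ)^(4*k+2) ≠ 0 := by positivity
  push_cast
  field_simp
  ring
end

section
/- For every positive integer j, the definite integral ∫_0^1 F_j(x) dx = r - π/4 for some rational number r, where F_j(x) = ∑_{m=0}^{2j-1} (-1)^m C(4j, 2m+1) x^{2m+2}/(x^2+1)^{2j+1}; in particular ∫_0^1 F_j(x) dx ≠ 0. -/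
open Real intervalIntegral Finset

private lemma sum_range_even_odd' (n : ℕ) (f : ℕ → ℝ) :
    ∑ i ∈ range (2 * n), f i = ∑ i ∈ range n, f (2 * i) + ∑ i ∈ range n, f (2 * i + 1) := by
  induction n with
  | zero => simp
  | succ n ih =>
      have h2 : 2 * (n + 1) = (2 * n + 1) + 1 := by ring
      rw [h2, Finset.sum_range_succ, Finset.sum_range_succ, Finset.sum_range_succ,
        Finset.sum_range_succ, ih]
      ring

private lemma lemA' (j : ℕ) (x : ℝ) :
    (∑ m ∈ range (2 * j), (-1 : ℝ) ^ m * (Nat.choose (4 * j) (2 * m + 1)) * x ^ (2 * m + 1))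
      = ((1 + (x : ℂ) * Complex.I) ^ (4 * j)).im := by
  have hb : (1 + (x : ℂ) * Complex.I) ^ (4 * j)
      = ∑ k ∈ range (4 * j + 1), ((x : ℂ) * Complex.I) ^ k * (Nat.choose (4 * j) k) := by
    rw [add_comm (1 : ℂ), add_pow]; simp
  rw [hb, Complex.im_sum, Finset.sum_range_succ]
  have h4 : 4 * j = 2 * (2 * j) := by ring
  rw [show range (4*j) = range (2*(2*j)) by rw [← h4],
    sum_range_even_odd' (2*j) (fun k => (((x : ℂ) * Complex.I) ^ k * (Nat.choose (4 * j) k)).im)]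
  have heven : ∀ i : ℕ, (((x : ℂ) * Complex.I) ^ (2*i) * (Nat.choose (4 * j) (2*i))).im = 0 := by
    intro i
    have : ((x : ℂ) * Complex.I) ^ (2*i) * (Nat.choose (4 * j) (2*i))
        = (((x^(2*i) * (-1)^i * (Nat.choose (4 * j) (2*i)) : ℝ)) : ℂ) := by
      rw [mul_pow, pow_mul Complex.I, Complex.I_sq]
      push_cast; ring
    rw [this, Complex.ofReal_im]
  have hodd : ∀ i : ℕ, (((x : ℂ) * Complex.I) ^ (2*i+1) * (Nat.choose (4 * j) (2*i+1))).im
      = (-1:ℝ)^i * (Nat.choose (4 * j) (2*i+1)) * x^(2*i+1) := by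
    intro i
    have : ((x : ℂ) * Complex.I) ^ (2*i+1) * (Nat.choose (4 * j) (2*i+1))
        = (((-1:ℝ)^i * (Nat.choose (4 * j) (2*i+1)) * x^(2*i+1) : ℝ) : ℂ) * Complex.I := by
      rw [pow_succ, mul_pow, pow_mul Complex.I, Complex.I_sq]
      push_cast; ring
    rw [this, Complex.mul_I_im, Complex.ofReal_re]
  have hlast : (((x : ℂ) * Complex.I) ^ (4*j) * (Nat.choose (4 * j) (4*j))).im = 0 := by
    have := heven (2*j); rwa [← h4] at this
  simp only [heven, hodd, hlast]
  simp

private lemma polar' (x : ℝ) : ((1:ℂ) + (x : ℂ) * Complex.I)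
    = (Real.sqrt (1 + x^2) : ℝ) * Complex.exp ((arctan x : ℝ) * Complex.I) := by
  have hs : Real.sqrt (1 + x^2) ≠ 0 := by positivity
  rw [Complex.ext_iff]
  constructor
  · simp only [Complex.add_re, Complex.one_re, Complex.mul_re, Complex.ofReal_re,
      Complex.I_re, Complex.ofReal_im, Complex.I_im, Complex.exp_ofReal_mul_I_re,
      Real.cos_arctan]
    field_simp
    simp
  · simp only [Complex.add_im, Complex.one_im, Complex.mul_im, Complex.ofReal_re,
      Complex.I_re, Complex.ofReal_im, Complex.I_im, Complex.exp_ofReal_mul_I_im,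
      Real.sin_arctan]
    field_simp
    simp

private lemma deMoivre' (j : ℕ) (x : ℝ) :
    ((1 + (x : ℂ) * Complex.I) ^ (4 * j)).im
      = (1 + x^2) ^ (2 * j) * Real.sin (4 * j * arctan x) := by
  rw [polar', mul_pow, ← Complex.exp_nat_mul]
  have h1 : ((Real.sqrt (1 + x^2) : ℝ) : ℂ) ^ (4*j) = (((1 + x^2)^(2*j) : ℝ) : ℂ) := by
    rw [← Complex.ofReal_pow, show 4*j = 2*(2*j) by ring, pow_mul,
      Real.sq_sqrt (by positivity : (0:ℝ) ≤ 1 + x^2)]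
  have h2 : ((4*j : ℕ) : ℂ) * ((arctan x : ℝ) * Complex.I)
      = (((4*j : ℕ) * arctan x : ℝ)) * Complex.I := by push_cast; ring
  rw [h1, h2, Complex.im_ofReal_mul, Complex.exp_ofReal_mul_I_im]
  push_cast; ring

private lemma lemB' (x : ℝ) (N : ℕ) :
    x * Real.sin (2*(N+1) * arctan x) + x * Real.sin (2*N * arctan x)
      = Real.cos (2*N * arctan x) - Real.cos (2*(N+1) * arctan x) := by
  set c := arctan x with hc
  have h1 : (2*((N:ℝ)+1)) * c = (2*N+1)*c + c := by ring
  have h2 : (2*(N:ℝ)) * c = (2*N+1)*c - c := by ring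
  rw [h1, h2, Real.sin_add, Real.sin_sub, Real.cos_add, Real.cos_sub]
  have hx : x * Real.cos c = Real.sin c := by
    rw [hc, Real.cos_arctan, Real.sin_arctan]; field_simp
  linear_combination 2 * Real.sin ((2*(N:ℝ)+1)*c) * hx

private lemma lemC' (x : ℝ) (N : ℕ) :
    ∑ k ∈ range N, (-1:ℝ)^(k+1) * (Real.cos (2*k * arctan x) - Real.cos (2*(k+1) * arctan x))
      = (-1:ℝ)^N * (x * Real.sin (2*N * arctan x)) := by
  induction N with
  | zero => simp
  | succ N ih =>
      rw [Finset.sum_range_succ, ih]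
      have hB := lemB' x N
      push_cast at hB ⊢
      linear_combination ((-1:ℝ)^N) * hB

noncomputable def hfun (k : ℕ) (x : ℝ) : ℝ :=
  if k = 0 then arctan x else Real.sin (2*k*arctan x)/(2*k)

private lemma hasDerivAt_hfun (k : ℕ) (x : ℝ) :
    HasDerivAt (hfun k) (Real.cos (2*k*arctan x)/(1+x^2)) x := by
  rcases Nat.eq_zero_or_pos k with hk | hk
  · subst hk
    simp only [hfun, CharP.cast_eq_zero, mul_zero, zero_mul, Real.cos_zero, if_true]
    simpa [show hfun 0 = arctan from funext fun y => by simp [hfun]] using Real.hasDerivAt_arctan x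
  · have hk0 : (k : ℝ) ≠ 0 := Nat.cast_ne_zero.mpr hk.ne'
    have h1 : HasDerivAt (fun y : ℝ => 2*(k:ℝ)*arctan y) (2*k*(1/(1+x^2))) x :=
      (Real.hasDerivAt_arctan x).const_mul (2*(k:ℝ))
    have h2 := (Real.hasDerivAt_sin (2*(k:ℝ)*arctan x)).comp x h1
    have h3 := h2.div_const (2*(k:ℝ))
    have : hfun k = fun y => Real.sin (2*(k:ℝ)*arctan y) / (2*(k:ℝ)) := by
      funext y; simp [hfun, hk.ne']
    rw [this]
    refine h3.congr_deriv ?_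
    field_simp

noncomputable def Gfun (j : ℕ) (x : ℝ) : ℝ :=
  ∑ k ∈ range (2*j), (-1:ℝ)^(k+1) * (hfun k x - hfun (k+1) x)

private lemma hasDerivAt_Gfun (j : ℕ) (x : ℝ) :
    HasDerivAt (Gfun j)
      (∑ m ∈ Finset.range (2 * j),
          (-1 : ℝ) ^ m * (Nat.choose (4 * j) (2 * m + 1)) *
            x ^ (2 * m + 2) / (x ^ 2 + 1) ^ (2 * j + 1)) x := by
  have hD : HasDerivAt (Gfun j)
      (∑ k ∈ range (2*j), (-1:ℝ)^(k+1) *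
        (Real.cos (2*(k:ℝ)*arctan x)/(1+x^2) - Real.cos (2*(((k+1:ℕ)):ℝ)*arctan x)/(1+x^2))) x := by
    apply HasDerivAt.fun_sum
    intro k _
    exact ((hasDerivAt_hfun k x).sub (hasDerivAt_hfun (k+1) x)).const_mul _
  push_cast at hD
  have hpos : (0:ℝ) < 1 + x^2 := by positivity
  have hsum : (∑ k ∈ range (2*j), (-1:ℝ)^(k+1) *
        (Real.cos (2*k*arctan x)/(1+x^2) - Real.cos (2*(k+1)*arctan x)/(1+x^2)))
      = x * Real.sin (4*j*arctan x) / (1+x^2) := by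
    have h1 : ∀ k : ℕ, (-1:ℝ)^(k+1) *
        (Real.cos (2*k*arctan x)/(1+x^2) - Real.cos (2*(k+1)*arctan x)/(1+x^2))
        = ((-1:ℝ)^(k+1) * (Real.cos (2*k*arctan x) - Real.cos (2*(k+1)*arctan x))) / (1+x^2) := by
      intro k; ring
    simp_rw [h1, ← Finset.sum_div]
    rw [lemC' x (2*j)]
    have h2 : ((-1:ℝ))^(2*j) = 1 := by rw [pow_mul, neg_one_sq, one_pow]
    rw [h2]
    have h3 : (2*((2*j:ℕ):ℝ)) * arctan x = ((4*j:ℕ):ℝ) * arctan x := by push_cast; ring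
    rw [h3]
    push_cast
    ring_nf
  have hint : (∑ m ∈ Finset.range (2 * j),
          (-1 : ℝ) ^ m * (Nat.choose (4 * j) (2 * m + 1)) *
            x ^ (2 * m + 2) / (x ^ 2 + 1) ^ (2 * j + 1))
      = x * Real.sin (4*j*arctan x) / (1+x^2) := by
    have h1 : ∀ m : ℕ, (-1 : ℝ) ^ m * (Nat.choose (4 * j) (2 * m + 1)) *
            x ^ (2 * m + 2) / (x ^ 2 + 1) ^ (2 * j + 1)
        = ((-1 : ℝ) ^ m * (Nat.choose (4 * j) (2 * m + 1)) * x ^ (2 * m + 1))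
            * (x / (x ^ 2 + 1) ^ (2 * j + 1)) := by
      intro m
      rw [pow_succ x (2*m+1)]
      ring
    simp_rw [h1, ← Finset.sum_mul]
    rw [lemA', deMoivre']
    have hne : (x^2 + 1 : ℝ) ≠ 0 := by positivity
    field_simp
    ring
  rw [hint, ← hsum]
  exact hD

private lemma Gfun_zero (j : ℕ) : Gfun j 0 = 0 := by
  simp [Gfun, hfun]

def sc : ℕ → ℚ × ℚ
  | 0 => (0, 1)
  | k+1 => ((sc k).2, -(sc k).1)

private lemma sc_spec (k : ℕ) :
    Real.sin (k * (π/2)) = ((sc k).1 : ℝ) ∧ Real.cos (k * (π/2)) = ((sc k).2 : ℝ) := by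
  induction k with
  | zero => simp [sc]
  | succ k ih =>
      have h : (((k+1:ℕ)):ℝ) * (π/2) = k*(π/2) + π/2 := by push_cast; ring
      rw [h, Real.sin_add, Real.cos_add, Real.sin_pi_div_two, Real.cos_pi_div_two,
        ih.1, ih.2]
      constructor
      · simp [sc]
      · simp [sc]

noncomputable def qv (k : ℕ) : ℚ := (sc k).1 / (2*k)

private lemma hfun_one (k : ℕ) :
    hfun k 1 = ((qv k : ℚ) : ℝ) + (if k = 0 then π/4 else 0) := by
  rcases Nat.eq_zero_or_pos k with hk | hk
  · subst hk
    simp [hfun, qv, sc, Real.arctan_one]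
  · have hk0 : (k : ℝ) ≠ 0 := Nat.cast_ne_zero.mpr hk.ne'
    simp only [hfun, hk.ne', if_false, Real.arctan_one]
    have h1 : 2*(k:ℝ)*(π/4) = (k:ℝ)*(π/2) := by ring
    rw [h1, (sc_spec k).1, qv]
    push_cast
    simp [hk.ne']

private lemma Gfun_one (j : ℕ) (hj : 0 < j) :
    Gfun j 1 = ((∑ k ∈ range (2*j), (-1:ℚ)^(k+1) * (qv k - qv (k+1)) : ℚ) : ℝ) - π/4 := by
  have hterm : ∀ k : ℕ, (-1:ℝ)^(k+1) * (hfun k 1 - hfun (k+1) 1)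
      = (((-1:ℚ)^(k+1) * (qv k - qv (k+1)) : ℚ) : ℝ) + (if k = 0 then -(π/4) else 0) := by
    intro k
    rw [hfun_one, hfun_one]
    rcases Nat.eq_zero_or_pos k with hk | hk
    · subst hk
      push_cast
      simp
      try ring
    · push_cast
      simp [hk.ne', Nat.succ_ne_zero]
      try ring
  rw [Gfun]
  simp_rw [hterm]
  rw [Finset.sum_add_distrib, Finset.sum_ite_eq' (range (2*j)) 0 (fun _ => -(π/4))]
  have h0 : (0:ℕ) ∈ range (2*j) := Finset.mem_range.mpr (by omega)
  rw [if_pos h0]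
  push_cast
  ring

theorem integral_Fj_nonzero (j : ℕ) (hj : 0 < j) :
    ∃ r : ℚ,
      (∫ x in (0:ℝ)..1, ∑ m ∈ Finset.range (2 * j),
          (-1 : ℝ) ^ m * (Nat.choose (4 * j) (2 * m + 1)) *
            x ^ (2 * m + 2) / (x ^ 2 + 1) ^ (2 * j + 1))
        = (r : ℝ) - π / 4 ∧
      (∫ x in (0:ℝ)..1, ∑ m ∈ Finset.range (2 * j),
          (-1 : ℝ) ^ m * (Nat.choose (4 * j) (2 * m + 1)) *
            x ^ (2 * m + 2) / (x ^ 2 + 1) ^ (2 * j + 1)) ≠ 0 := by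
  set r : ℚ := ∑ k ∈ range (2*j), (-1:ℚ)^(k+1) * (qv k - qv (k+1)) with hr
  have hcont : Continuous (fun x : ℝ => ∑ m ∈ Finset.range (2 * j),
      (-1 : ℝ) ^ m * (Nat.choose (4 * j) (2 * m + 1)) *
        x ^ (2 * m + 2) / (x ^ 2 + 1) ^ (2 * j + 1)) := by
    apply continuous_finset_sum
    intro m _
    apply Continuous.div
    · continuity
    · continuity
    · intro x; positivity
  have hI : (∫ x in (0:ℝ)..1, ∑ m ∈ Finset.range (2 * j),
          (-1 : ℝ) ^ m * (Nat.choose (4 * j) (2 * m + 1)) *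
            x ^ (2 * m + 2) / (x ^ 2 + 1) ^ (2 * j + 1)) = Gfun j 1 - Gfun j 0 := by
    apply intervalIntegral.integral_eq_sub_of_hasDerivAt
    · intro t _
      exact hasDerivAt_Gfun j t
    · exact hcont.intervalIntegrable 0 1
  rw [hI, Gfun_zero, Gfun_one j hj, ← hr]
  refine ⟨r, by ring, ?_⟩
  intro h
  have h2 : π = ((4*r : ℚ) : ℝ) := by push_cast; linarith
  exact irrational_pi ⟨4*r, h2.symm⟩
end

section
/- For j ≥ 1, in polar coordinates, ∫_E conj(w)^{2j-1}/w^{2j+1} dw = ∫_1^{√2} ∫_{θ(r)}^{π/2 - θ(r)} e^{-4ijθ} dθ (dr/r), where E = {w ∈ ([-1,1]²) \ D(0,1) : Re w > 0, Im w > 0} and θ(r) = arccos(1/r); consequently the real integral equals (−1/(2j)) ∫_1^{√2} sin(4j θ(r)) dr/r and the imaginary part vanishes after symmetrization. -/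
open MeasureTheory Complex Real intervalIntegral

-- inner integral evaluation
lemma inner_eval (j : ℕ) (hj : 1 ≤ j) (α : ℝ) :
    (∫ θ in α..(π / 2 - α), Complex.exp (-(4 * j * θ) * Complex.I))
      = ((-(Real.sin (4 * j * α)) / (2 * j) : ℝ) : ℂ) := by
  have hc : (-(4 * (j:ℂ)) * Complex.I) ≠ 0 := by
    have : (j:ℂ) ≠ 0 := Nat.cast_ne_zero.2 (by omega)
    simp [Complex.I_ne_zero, this]
  have h1 : ∀ θ : ℝ, Complex.exp (-(4 * (j:ℂ) * θ) * Complex.I)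
      = Complex.exp ((-(4 * (j:ℂ)) * Complex.I) * θ) := by
    intro θ; ring_nf
  simp_rw [h1]
  rw [integral_exp_mul_complex hc]
  have hb : (-(4 * (j:ℂ)) * Complex.I) * ((π:ℝ) / 2 - α)
      = (-(j:ℤ)) * (2 * π * Complex.I) + (4 * j * α) * Complex.I := by
    push_cast; ring
  have ha : (-(4 * (j:ℂ)) * Complex.I) * (α:ℝ) = -((4 * j * α : ℝ) : ℂ) * Complex.I := by
    push_cast; ring
  have hper : Complex.exp (-(((j:ℤ)):ℂ) * (2 * π * Complex.I)) = 1 := by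
    have := Complex.exp_int_mul_two_pi_mul_I (-(j:ℤ)); push_cast at this; exact this
  push_cast
  rw [hb, ha, Complex.exp_add]
  push_cast at hper
  push_cast
  rw [hper, one_mul]
  have key : Complex.exp (((4 * j * α : ℝ):ℂ) * Complex.I) - Complex.exp (-((4 * j * α : ℝ):ℂ) * Complex.I)
      = 2 * Real.sin (4 * j * α) * Complex.I := by
    rw [Complex.exp_mul_I, Complex.exp_mul_I]
    simp [Complex.cos_neg, Complex.sin_neg, Complex.ofReal_sin]
    ring
  push_cast
  push_cast at key
  rw [key]
  have hj0 : (j:ℂ) ≠ 0 := Nat.cast_ne_zero.2 (by omega)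
  field_simp
  ring

lemma value_eq (j : ℕ) (hj : 1 ≤ j) (r θ : ℝ) (hr : 0 < r) :
    r • ((starRingEnd ℂ (Complex.polarCoord.symm (r, θ))) ^ (2 * j - 1)
        / (Complex.polarCoord.symm (r, θ)) ^ (2 * j + 1))
      = Complex.exp (-(4 * j * θ) * Complex.I) / r := by
  have hw : Complex.polarCoord.symm (r, θ) = (r : ℂ) * Complex.exp (θ * Complex.I) := by
    rw [Complex.polarCoord_symm_apply, Complex.exp_mul_I]
    simp [Complex.ofReal_cos, Complex.ofReal_sin]
  have hconj : (starRingEnd ℂ) (Complex.polarCoord.symm (r, θ))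
      = (r : ℂ) * Complex.exp (-(θ:ℂ) * Complex.I) := by
    rw [hw, map_mul, Complex.conj_ofReal, ← Complex.exp_conj]
    congr 1
    simp [Complex.conj_ofReal]
  obtain ⟨k, hk1, hk2⟩ : ∃ k, 2 * j - 1 = k ∧ 2 * j + 1 = k + 2 :=
    ⟨2 * j - 1, rfl, by omega⟩
  have hkc : (2 * (j:ℂ) + 1) = (k:ℂ) + 2 := by exact_mod_cast hk2
  rw [hconj, hw, hk1, hk2, mul_pow, mul_pow, ← Complex.exp_nat_mul, ← Complex.exp_nat_mul]
  have hr0 : (r : ℂ) ≠ 0 := Complex.ofReal_ne_zero.2 hr.ne'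
  have hexp : Complex.exp (-(4 * (j:ℂ) * θ) * Complex.I)
        * Complex.exp ((k + 2 : ℕ) * ((θ:ℂ) * Complex.I))
      = Complex.exp ((k : ℕ) * (-(θ:ℂ) * Complex.I)) := by
    rw [← Complex.exp_add]
    congr 1
    push_cast
    linear_combination (-2 * (θ:ℂ) * Complex.I) * hkc
  have hden : ((r:ℂ))^(k+2) * Complex.exp ((k + 2 : ℕ) * ((θ:ℂ) * Complex.I)) ≠ 0 :=
    mul_ne_zero (pow_ne_zero _ hr0) (Complex.exp_ne_zero _)
  rw [Complex.real_smul, mul_div_assoc', div_eq_div_iff hden hr0]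
  linear_combination (-(r:ℂ)^(k+2)) * hexp

lemma mem_iff (r θ : ℝ) (hr1 : r ≠ 1) (hr2 : r ≠ Real.sqrt 2) :
    ((r, θ) ∈ _root_.polarCoord.target ∧ Complex.polarCoord.symm (r, θ) ∈
      {w : ℂ | (|w.re| ≤ 1 ∧ |w.im| ≤ 1) ∧ w ∉ Metric.ball (0:ℂ) 1 ∧ 0 < w.re ∧ 0 < w.im})
    ↔ (1 < r ∧ r < Real.sqrt 2 ∧
        Real.arccos (1/r) ≤ θ ∧ θ ≤ π/2 - Real.arccos (1/r)) := by
  have hre : (Complex.polarCoord.symm (r, θ)).re = r * Real.cos θ := by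
    rw [Complex.polarCoord_symm_apply]; simp [Complex.cos_ofReal_re]
  have him : (Complex.polarCoord.symm (r, θ)).im = r * Real.sin θ := by
    rw [Complex.polarCoord_symm_apply]; simp [Complex.sin_ofReal_re]
  have hball : Complex.polarCoord.symm (r, θ) ∉ Metric.ball (0:ℂ) 1 ↔ 1 ≤ |r| := by
    simp [Metric.mem_ball, Complex.dist_eq, Complex.norm_polarCoord_symm]
  have htarget : (r, θ) ∈ _root_.polarCoord.target ↔ 0 < r ∧ -π < θ ∧ θ < π := by
    rw [polarCoord_target]
    simp [Set.mem_Ioi, Set.mem_Ioo, and_assoc]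
  have hs2 : (1:ℝ) < Real.sqrt 2 := by
    nlinarith [Real.sq_sqrt (by norm_num : (2:ℝ) ≥ 0), Real.sqrt_nonneg 2]
  have h22 : Real.sqrt 2 / 2 = 1 / Real.sqrt 2 := by
    rw [div_eq_div_iff (by norm_num) (by positivity)]
    nlinarith [Real.sq_sqrt (by norm_num : (2:ℝ) ≥ 0)]
  constructor
  · rintro ⟨ht, ⟨⟨h1, h2⟩, h3, h4, h5⟩⟩
    rw [htarget] at ht
    obtain ⟨hr, hθ1, hθ2⟩ := ht
    rw [hre] at h1 h4
    rw [him] at h2 h5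
    rw [hball] at h3
    have hcos : 0 < Real.cos θ := by
      rcases mul_pos_iff.mp h4 with ⟨_, h⟩ | ⟨h, _⟩
      · exact h
      · linarith
    have hsin : 0 < Real.sin θ := by nlinarith
    have hθ0 : 0 < θ := by
      by_contra h
      exact absurd (Real.sin_nonpos_of_nonpos_of_neg_pi_le (by linarith) hθ1.le) (by linarith)
    have hθπ2 : θ < π / 2 := by
      by_contra h
      push_neg at h
      have := Real.cos_nonpos_of_pi_div_two_le_of_le h (by linarith)
      linarith
    have hr1' : 1 < r := lt_of_le_of_ne (by rwa [abs_of_pos hr] at h3) (Ne.symm hr1)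
    have hrc : Real.cos θ ≤ 1 / r := by
      rw [le_div_iff₀ hr]
      calc Real.cos θ * r = r * Real.cos θ := by ring
        _ ≤ |r * Real.cos θ| := le_abs_self _
        _ ≤ 1 := h1
    have hrs : Real.sin θ ≤ 1 / r := by
      rw [le_div_iff₀ hr]
      calc Real.sin θ * r = r * Real.sin θ := by ring
        _ ≤ |r * Real.sin θ| := le_abs_self _
        _ ≤ 1 := h2
    have hαθ : Real.arccos (1/r) ≤ θ := by
      calc Real.arccos (1/r) ≤ Real.arccos (Real.cos θ) := by
            rw [Real.arccos, Real.arccos]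
            have := Real.monotone_arcsin hrc
            linarith
        _ = θ := Real.arccos_cos hθ0.le (by linarith [Real.pi_pos])
    have hθα : θ ≤ π/2 - Real.arccos (1/r) := by
      rw [Real.arccos_eq_pi_div_two_sub_arcsin]
      have h' : Real.arcsin (Real.sin θ) ≤ Real.arcsin (1/r) := Real.monotone_arcsin hrs
      rw [Real.arcsin_sin (by linarith) (by linarith)] at h'
      linarith
    have hrlt : r < Real.sqrt 2 := by
      refine lt_of_le_of_ne ?_ hr2
      have hα4 : Real.arccos (1/r) ≤ π / 4 := by linarith
      have h1r : 1 / r ≤ 1 := by rw [div_le_one hr]; linarith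
      have h1r' : (0:ℝ) < 1 / r := by positivity
      have : Real.cos (π/4) ≤ Real.cos (Real.arccos (1/r)) :=
        Real.cos_le_cos_of_nonneg_of_le_pi (Real.arccos_nonneg _)
          (by linarith [Real.pi_pos]) hα4
      rw [Real.cos_arccos (by linarith) h1r, Real.cos_pi_div_four, h22] at this
      rw [div_le_div_iff₀ (by positivity) hr] at this
      linarith
    exact ⟨hr1', hrlt, hαθ, hθα⟩
  · rintro ⟨hr1', hrlt, hαθ, hθα⟩
    have hr : 0 < r := by linarith
    have h1r : 1 / r ≤ 1 := by rw [div_le_one hr]; linarith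
    have h1r' : (0:ℝ) < 1 / r := by positivity
    have hα0 : 0 < Real.arccos (1/r) := Real.arccos_pos.2 (by
      rw [div_lt_one hr]; linarith)
    have hαπ2 : Real.arccos (1/r) < π/2 := Real.arccos_lt_pi_div_two.2 h1r'
    have hθ0 : 0 < θ := by linarith
    have hθπ2 : θ < π / 2 := by linarith
    have hπ : 0 < π := Real.pi_pos
    have hcosα : Real.cos (Real.arccos (1/r)) = 1/r := Real.cos_arccos (by linarith) h1r
    have hcos : 0 < Real.cos θ := Real.cos_pos_of_mem_Ioo ⟨by linarith, hθπ2⟩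
    have hsin : 0 < Real.sin θ := Real.sin_pos_of_pos_of_lt_pi hθ0 (by linarith)
    have hcosle : Real.cos θ ≤ 1/r := by
      calc Real.cos θ ≤ Real.cos (Real.arccos (1/r)) :=
            Real.cos_le_cos_of_nonneg_of_le_pi (Real.arccos_nonneg _) (by linarith) hαθ
        _ = 1/r := hcosα
    have hsinle : Real.sin θ ≤ 1/r := by
      calc Real.sin θ ≤ Real.sin (π/2 - Real.arccos (1/r)) :=
            Real.sin_le_sin_of_le_of_le_pi_div_two (by linarith) (by linarith) hθα
        _ = 1/r := by rw [Real.sin_pi_div_two_sub, hcosα]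
    refine ⟨htarget.2 ⟨hr, by linarith, by linarith⟩, ⟨⟨?_, ?_⟩, ?_, ?_, ?_⟩⟩
    · rw [hre, abs_of_pos (by positivity)]
      calc r * Real.cos θ ≤ r * (1/r) := by nlinarith
        _ = 1 := by field_simp
    · rw [him, abs_of_pos (by positivity)]
      calc r * Real.sin θ ≤ r * (1/r) := by nlinarith
        _ = 1 := by field_simp
    · rw [hball, abs_of_pos hr]; linarith
    · rw [hre]; positivity
    · rw [him]; positivity

theorem integral_E_polar_coordinates (j : ℕ) (hj : 1 ≤ j)
    (E : Set ℂ)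
    (hE : E = {w : ℂ | (|w.re| ≤ 1 ∧ |w.im| ≤ 1) ∧ w ∉ Metric.ball (0:ℂ) 1 ∧
      0 < w.re ∧ 0 < w.im}) :
    (∫ w in E, (starRingEnd ℂ w) ^ (2 * j - 1) / w ^ (2 * j + 1) ∂volume)
      = (∫ r in (1:ℝ)..Real.sqrt 2,
          (∫ θ in Real.arccos (1 / r)..(π / 2 - Real.arccos (1 / r)),
            Complex.exp (-(4 * j * θ) * Complex.I)) / (r : ℂ)) ∧
    (∫ w in E, (starRingEnd ℂ w) ^ (2 * j - 1) / w ^ (2 * j + 1) ∂volume)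
      = ((-1 / (2 * j) *
          ∫ r in (1:ℝ)..Real.sqrt 2, Real.sin (4 * j * Real.arccos (1 / r)) / r : ℝ) : ℂ) := by
  subst hE
  set f : ℂ → ℂ := fun w => (starRingEnd ℂ w) ^ (2 * j - 1) / w ^ (2 * j + 1) with hf
  set E : Set ℂ := {w : ℂ | (|w.re| ≤ 1 ∧ |w.im| ≤ 1) ∧ w ∉ Metric.ball (0:ℂ) 1 ∧
      0 < w.re ∧ 0 < w.im} with hE
  set T : Set (ℝ × ℝ) := {p | 1 < p.1 ∧ p.1 < Real.sqrt 2 ∧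
      Real.arccos (1/p.1) ≤ p.2 ∧ p.2 ≤ π/2 - Real.arccos (1/p.1)} with hT
  set g : ℝ × ℝ → ℂ := fun p => Complex.exp (-(4 * j * p.2) * Complex.I) / p.1 with hg
  have hEm : MeasurableSet E := by
    apply MeasurableSet.inter
    · exact (measurableSet_le (measurable_norm.comp Complex.measurable_re) measurable_const).inter
        (measurableSet_le (measurable_norm.comp Complex.measurable_im) measurable_const)
    · exact (measurableSet_ball.compl).inter
        ((measurableSet_lt measurable_const Complex.measurable_re).inter
          (measurableSet_lt measurable_const Complex.measurable_im))
  have hTm : MeasurableSet T := by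
    have hα : Measurable fun p : ℝ × ℝ => Real.arccos (1/p.1) :=
      Real.continuous_arccos.measurable.comp (measurable_const.div measurable_fst)
    exact (measurableSet_lt measurable_const measurable_fst).inter
      ((measurableSet_lt measurable_fst measurable_const).inter
        ((measurableSet_le hα measurable_snd).inter
          (measurableSet_le measurable_snd (measurable_const.sub hα))))
  have hgm : Measurable g := by
    apply Measurable.div
    · exact Complex.measurable_exp.comp
        ((measurable_const.mul (Complex.measurable_ofReal.comp measurable_snd)).neg.mul
          measurable_const)
    · exact Complex.measurable_ofReal.comp measurable_fst
  have hs2 : (1:ℝ) < Real.sqrt 2 := by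
    nlinarith [Real.sq_sqrt (by norm_num : (2:ℝ) ≥ 0), Real.sqrt_nonneg 2]
  -- Step 1 : polar coordinates
  have step1 : (∫ w in E, f w ∂volume)
      = ∫ p in _root_.polarCoord.target, p.1 • (Set.indicator E f) (Complex.polarCoord.symm p) := by
    rw [Complex.integral_comp_polarCoord_symm, MeasureTheory.integral_indicator hEm]
  -- Step 2 : a.e. identification with indicator T g
  have step2 : (∫ p in _root_.polarCoord.target,
        p.1 • (Set.indicator E f) (Complex.polarCoord.symm p))
      = ∫ p : ℝ × ℝ, Set.indicator T g p := by
    rw [← MeasureTheory.integral_indicator _root_.polarCoord.open_target.measurableSet]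
    apply MeasureTheory.integral_congr_ae
    have hnull : volume {p : ℝ × ℝ | p.1 = 1 ∨ p.1 = Real.sqrt 2} = 0 := by
      have heq : {p : ℝ × ℝ | p.1 = 1 ∨ p.1 = Real.sqrt 2}
          = (({1, Real.sqrt 2} : Set ℝ) ×ˢ (Set.univ : Set ℝ)) := by
        ext p; simp [Set.mem_prod]
      rw [heq, MeasureTheory.Measure.volume_eq_prod, MeasureTheory.Measure.prod_prod]
      have : volume ({1, Real.sqrt 2} : Set ℝ) = 0 := (Set.toFinite _).measure_zero _
      rw [this, zero_mul]
    have hae : ∀ᵐ p : ℝ × ℝ, ¬(p.1 = 1 ∨ p.1 = Real.sqrt 2) :=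
      measure_eq_zero_iff_ae_notMem.1 hnull
    filter_upwards [hae] with p hp
    push_neg at hp
    obtain ⟨hp1, hp2⟩ := hp
    by_cases hmem : p ∈ _root_.polarCoord.target ∧ Complex.polarCoord.symm p ∈ E
    · have hTmem : p ∈ T := (mem_iff p.1 p.2 hp1 hp2).1 hmem
      rw [Set.indicator_of_mem hmem.1, Set.indicator_of_mem hmem.2, Set.indicator_of_mem hTmem]
      have h0 : (0:ℝ) < p.1 := lt_trans one_pos hTmem.1
      exact value_eq j hj p.1 p.2 h0
    · have hTnot : p ∉ T := fun h => hmem ((mem_iff p.1 p.2 hp1 hp2).2 h)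
      rw [Set.indicator_of_notMem hTnot]
      by_cases hpt : p ∈ _root_.polarCoord.target
      · rw [Set.indicator_of_mem hpt]
        have : Complex.polarCoord.symm p ∉ E := fun h => hmem ⟨hpt, h⟩
        rw [Set.indicator_of_notMem this, smul_zero]
      · rw [Set.indicator_of_notMem hpt]
  -- Integrability
  have hInt : Integrable (Set.indicator T g) (volume : Measure (ℝ × ℝ)) := by
    set B : Set (ℝ × ℝ) := Set.Icc (1:ℝ) (Real.sqrt 2) ×ˢ Set.Icc (0:ℝ) (π/2) with hB
    have hBm : MeasurableSet B := measurableSet_Icc.prod measurableSet_Icc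
    apply Integrable.mono' (g := B.indicator (fun _ => (1:ℝ)))
    · rw [MeasureTheory.integrable_indicator_iff hBm]
      refine (integrableOn_const_iff (by simp)).2 (Or.inr ?_)
      rw [hB, MeasureTheory.Measure.volume_eq_prod, MeasureTheory.Measure.prod_prod,
        Real.volume_Icc, Real.volume_Icc]
      exact ENNReal.mul_lt_top ENNReal.ofReal_lt_top ENNReal.ofReal_lt_top
    · exact (hgm.indicator hTm).aestronglyMeasurable
    · apply Filter.Eventually.of_forall
      intro p
      by_cases hp : p ∈ T
      · obtain ⟨h1, h2, h3, h4⟩ := id hp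
        have hα0 : 0 ≤ Real.arccos (1/p.1) := Real.arccos_nonneg _
        have hpB : p ∈ B := ⟨⟨h1.le, h2.le⟩, ⟨by linarith, by linarith⟩⟩
        rw [Set.indicator_of_mem hp, Set.indicator_of_mem hpB]
        have habs : ‖g p‖ = 1 / |p.1| := by
          rw [hg]
          simp only [norm_div]
          rw [show -(4 * (j:ℂ) * p.2) * Complex.I = ((-(4 * j * p.2) : ℝ) : ℂ) * Complex.I by
            push_cast; ring]
          rw [Complex.norm_exp_ofReal_mul_I]; simp
        rw [habs, abs_of_pos (by linarith)]
        rw [div_le_one (by linarith)]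
        linarith
      · rw [Set.indicator_of_notMem hp]
        simp only [norm_zero]
        exact Set.indicator_nonneg (fun _ _ => zero_le_one) _
  -- Step 3 : Fubini
  have step3 : (∫ p : ℝ × ℝ, Set.indicator T g p)
      = ∫ x : ℝ, ∫ y : ℝ, Set.indicator T g (x, y) := by
    rw [MeasureTheory.Measure.volume_eq_prod] at hInt ⊢
    exact (MeasureTheory.integral_integral (f := fun x y => Set.indicator T g (x, y)) hInt).symm
  -- Step 4 : identify inner integrals
  have step4 : (∫ x : ℝ, ∫ y : ℝ, Set.indicator T g (x, y))
      = ∫ r in (1:ℝ)..Real.sqrt 2,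
          (∫ θ in Real.arccos (1 / r)..(π / 2 - Real.arccos (1 / r)),
            Complex.exp (-(4 * j * θ) * Complex.I)) / (r : ℂ) := by
    have hαle : ∀ x : ℝ, x ∈ Set.Ioo (1:ℝ) (Real.sqrt 2) →
        Real.arccos (1/x) ≤ π/2 - Real.arccos (1/x) := by
      intro x hx
      have hx1 : (0:ℝ) < x := by linarith [hx.1]
      have h1 : Real.sqrt 2 / 2 ≤ 1 / x := by
        rw [div_le_div_iff₀ (by norm_num) hx1]
        nlinarith [hx.2, Real.sqrt_nonneg 2, Real.sq_sqrt (by norm_num : (2:ℝ) ≥ 0)]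
      have h2 : Real.arccos (1/x) ≤ Real.arccos (Real.sqrt 2 / 2) := by
        rw [Real.arccos, Real.arccos]
        have := Real.monotone_arcsin h1
        linarith
      have h3 : Real.arccos (Real.sqrt 2 / 2) = π / 4 := by
        rw [← Real.cos_pi_div_four]
        exact Real.arccos_cos (by positivity) (by linarith [Real.pi_pos])
      rw [h3] at h2
      linarith
    have hinner : ∀ x : ℝ, (∫ y : ℝ, Set.indicator T g (x, y))
        = Set.indicator (Set.Ioo (1:ℝ) (Real.sqrt 2)) (fun r =>
            (∫ θ in Real.arccos (1/r)..(π/2 - Real.arccos (1/r)),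
              Complex.exp (-(4 * j * θ) * Complex.I)) / (r:ℂ)) x := by
      intro x
      by_cases hx : x ∈ Set.Ioo (1:ℝ) (Real.sqrt 2)
      · rw [Set.indicator_of_mem hx]
        have h1 : ∀ y : ℝ, Set.indicator T g (x, y)
            = Set.indicator (Set.Icc (Real.arccos (1/x)) (π/2 - Real.arccos (1/x)))
                (fun y => g (x, y)) y := by
          intro y
          by_cases hy : y ∈ Set.Icc (Real.arccos (1/x)) (π/2 - Real.arccos (1/x))
          · rw [Set.indicator_of_mem _ g, Set.indicator_of_mem hy]
            exact ⟨hx.1, hx.2, hy.1, hy.2⟩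
          · rw [Set.indicator_of_notMem _ g, Set.indicator_of_notMem hy]
            intro h
            exact hy ⟨h.2.2.1, h.2.2.2⟩
        simp_rw [h1]
        rw [MeasureTheory.integral_indicator measurableSet_Icc,
          MeasureTheory.integral_Icc_eq_integral_Ioc,
          ← intervalIntegral.integral_of_le (hαle x hx)]
        rw [← intervalIntegral.integral_div]
      · rw [Set.indicator_of_notMem hx]
        have h1 : ∀ y : ℝ, Set.indicator T g (x, y) = 0 := by
          intro y
          apply Set.indicator_of_notMem
          intro h
          exact hx ⟨h.1, h.2.1⟩
        simp_rw [h1, MeasureTheory.integral_zero]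
    simp_rw [hinner]
    rw [MeasureTheory.integral_indicator measurableSet_Ioo,
      ← MeasureTheory.integral_Ioc_eq_integral_Ioo,
      ← intervalIntegral.integral_of_le hs2.le]
  have key := step1.trans (step2.trans (step3.trans step4))
  refine ⟨key, key.trans ?_⟩
  -- Step 5 : evaluate the inner integral
  have h5 : ∀ r : ℝ, (∫ θ in Real.arccos (1 / r)..(π / 2 - Real.arccos (1 / r)),
        Complex.exp (-(4 * j * θ) * Complex.I)) / (r : ℂ)
      = ((-(Real.sin (4 * j * Real.arccos (1/r))) / (2 * j) / r : ℝ) : ℂ) := by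
    intro r
    rw [inner_eval j hj, ← Complex.ofReal_div]
  simp_rw [h5, intervalIntegral.integral_ofReal]
  rw [Complex.ofReal_inj, ← intervalIntegral.integral_const_mul]
  apply intervalIntegral.integral_congr
  intro x _
  ring
end

section
/- Let α_k ∈ ℂ be a nonzero constant and k a positive even integer. Then there is no constant C and integer j ≥ 1 such that |∫_{|z|>3} (z^{k-1}/conj(z)^{k+1}) G(z) dz| ≤ C · M^j G(0) for all G ∈ L²(ℂ) with compact support: indeed, for every C > 0 there exists G with 0 ≤ G ≤ 1 compactly supported such that the left-hand side exceeds C while M^j G(0) ≤ 1. -/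
open MeasureTheory Metric Complex

/-- Hardy–Littlewood maximal operator on `ℂ ≅ ℝ²` (real-valued, via averages). -/
noncomputable def maximalR (f : ℂ → ℝ) : ℂ → ℝ := fun x =>
  ⨆ r : {r : ℝ // 0 < r}, ⨍ y in ball x r.1, |f y| ∂volume

lemma avg_mem_Icc {f : ℂ → ℝ} (hf : ∀ z, 0 ≤ f z ∧ f z ≤ 1) (x : ℂ) (r : ℝ) (hr : 0 < r) :
    (⨍ y in ball x r, |f y| ∂volume) ∈ Set.Icc (0:ℝ) 1 := by
  rw [setAverage_eq]
  have hlt : volume (ball x r) < ⊤ := measure_ball_lt_top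
  have hpos : 0 < (volume (ball x r)).toReal :=
    ENNReal.toReal_pos (measure_ball_pos volume x hr).ne' hlt.ne
  have h0 : 0 ≤ ∫ y in ball x r, |f y| ∂volume := integral_nonneg fun y => abs_nonneg _
  constructor
  · exact smul_nonneg (inv_nonneg.2 hpos.le) h0
  · have h2 : (∫ y in ball x r, |f y| ∂volume) ≤ (volume (ball x r)).toReal := by
      calc ∫ y in ball x r, |f y| ∂volume ≤ ∫ _y in ball x r, (1:ℝ) ∂volume := by
            refine integral_mono_of_nonneg (Filter.Eventually.of_forall fun y => abs_nonneg _)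
              (integrableOn_const hlt.ne) (Filter.Eventually.of_forall fun y => ?_)
            show |f y| ≤ (1:ℝ)
            rcases hf y with ⟨ha, hb⟩
            rwa [_root_.abs_of_nonneg ha]
        _ = (volume (ball x r)).toReal := by rw [setIntegral_const, smul_eq_mul, mul_one]; rfl
    rw [smul_eq_mul]
    calc (volume (ball x r)).toReal⁻¹ * (∫ y in ball x r, |f y| ∂volume)
        ≤ (volume (ball x r)).toReal⁻¹ * (volume (ball x r)).toReal :=
          mul_le_mul_of_nonneg_left h2 (inv_nonneg.2 hpos.le)
      _ = 1 := inv_mul_cancel₀ hpos.ne'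

lemma maximalR_mem_Icc {f : ℂ → ℝ} (hf : ∀ z, 0 ≤ f z ∧ f z ≤ 1) (z : ℂ) :
    0 ≤ maximalR f z ∧ maximalR f z ≤ 1 := by
  have hb : BddAbove (Set.range fun r : {r : ℝ // 0 < r} =>
      ⨍ y in ball z r.1, |f y| ∂volume) := by
    refine ⟨1, ?_⟩
    rintro _ ⟨r, rfl⟩
    exact (avg_mem_Icc hf z r.1 r.2).2
  constructor
  · exact le_trans (avg_mem_Icc hf z 1 one_pos).1 (le_ciSup hb ⟨1, one_pos⟩)
  · exact ciSup_le fun r => (avg_mem_Icc hf z r.1 r.2).2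

lemma maximalR_iter_mem_Icc {f : ℂ → ℝ} (hf : ∀ z, 0 ≤ f z ∧ f z ≤ 1) (j : ℕ) :
    ∀ z, 0 ≤ (maximalR^[j] f) z ∧ (maximalR^[j] f) z ≤ 1 := by
  induction j with
  | zero => exact hf
  | succ n ih =>
    rw [Function.iterate_succ_apply']
    exact maximalR_mem_Icc ih

theorem no_iterated_maximal_bound_even (k : ℕ) (hk : 0 < k) (hkeven : Even k)
    (j : ℕ) (hj : 1 ≤ j) (C : ℝ) (hC : 0 < C) :
    ∃ G : ℂ → ℝ, MemLp G 2 volume ∧ HasCompactSupport G ∧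
      (∀ z, 0 ≤ G z ∧ G z ≤ 1) ∧
      (maximalR^[j] G) 0 ≤ 1 ∧
      C < ‖∫ z in {z : ℂ | 3 < ‖z‖},
            (z ^ (k - 1) / (starRingEnd ℂ z) ^ (k + 1)) * (G z : ℂ) ∂volume‖ := by
  obtain ⟨m, rfl⟩ : ∃ m, k = m + 1 := ⟨k - 1, (Nat.succ_pred_eq_of_pos hk).symm⟩
  clear hk hkeven hj
  set a : ℝ := ((2:ℝ) * (m + 1))⁻¹ with ha_def
  have ha : 0 < a := by positivity
  have ha2 : a ≤ 1 / 2 := by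
    rw [ha_def]
    rw [inv_le_comm₀ (by positivity) (by norm_num)]
    push_cast
    linarith [Nat.cast_nonneg (α := ℝ) m]
  have haπ : a < Real.pi := lt_of_le_of_lt ha2 (by linarith [Real.pi_gt_three])
  set R : ℝ := 3 * Real.exp ((C + 1) / a) with hR_def
  have hR3 : 3 < R := by
    have h1 : 1 < Real.exp ((C + 1) / a) := by
      rw [Real.one_lt_exp_iff]; positivity
    nlinarith
  have hR0 : (0:ℝ) < R := by linarith
  set A : Set ℂ := {z | ‖z‖ ∈ Set.Ioo 3 R ∧ Complex.arg z ∈ Set.Ioo (-a) a}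
    with hA_def
  have hA : MeasurableSet A := by
    have : A = (fun z : ℂ => ‖z‖) ⁻¹' (Set.Ioo 3 R) ∩ Complex.arg ⁻¹' (Set.Ioo (-a) a) := rfl
    rw [this]
    exact (continuous_norm.measurable measurableSet_Ioo).inter
      (Complex.measurable_arg measurableSet_Ioo)
  set G : ℂ → ℝ := A.indicator (fun _ => (1:ℝ)) with hG_def
  have hGbd : ∀ z, 0 ≤ G z ∧ G z ≤ 1 := by
    intro z
    by_cases hz : z ∈ A <;> simp [hG_def, hz]
  have hAsub : A ⊆ ball (0:ℂ) R := by
    intro z hz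
    simpa [mem_ball, Complex.dist_eq] using hz.1.2
  have hAvol : volume A < ⊤ := lt_of_le_of_lt (measure_mono hAsub) measure_ball_lt_top
  refine ⟨G, memLp_indicator_const 2 hA 1 (Or.inr hAvol.ne), ?_, hGbd,
    (maximalR_iter_mem_Icc hGbd j 0).2, ?_⟩
  · refine HasCompactSupport.intro (isCompact_closedBall (0:ℂ) R) fun z hz => ?_
    refine Set.indicator_of_notMem (fun hzA => hz ?_) _
    have : ‖z‖ < R := hzA.1.2
    simpa [mem_closedBall, Complex.dist_eq] using this.le
  -- the main estimate
  set w : ℂ → ℂ := fun z => z ^ m / (starRingEnd ℂ z) ^ (m + 2) with hw_def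
  set T : Set (ℝ × ℝ) := Set.Ioo (3:ℝ) R ×ˢ Set.Ioo (-a) a with hT_def
  have hT : MeasurableSet T := measurableSet_Ioo.prod measurableSet_Ioo
  have hTvol : volume T < ⊤ := by
    rw [hT_def, Measure.volume_eq_prod, Measure.prod_prod, Real.volume_Ioo, Real.volume_Ioo]
    exact ENNReal.mul_lt_top ENNReal.ofReal_lt_top ENNReal.ofReal_lt_top
  set g : ℝ × ℝ → ℂ := fun p =>
    ((p.1⁻¹ : ℝ) : ℂ) * Complex.exp ((((2 * m + 2 : ℝ) * p.2 : ℝ) : ℂ) * I) with hg_def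
  -- step 1: the integral equals ∫_T g
  have hEq : (∫ z in {z : ℂ | 3 < ‖z‖},
      (z ^ (m + 1 - 1) / (starRingEnd ℂ z) ^ (m + 1 + 1)) * (G z : ℂ) ∂volume)
      = ∫ p in T, g p ∂volume := by
    have h1 : ∀ z : ℂ, (z ^ (m + 1 - 1) / (starRingEnd ℂ z) ^ (m + 1 + 1)) * (G z : ℂ)
        = A.indicator w z := by
      intro z
      by_cases hz : z ∈ A <;> simp [hG_def, hw_def, hz]
    simp_rw [h1]
    rw [setIntegral_indicator hA,
      Set.inter_eq_self_of_subset_right (show A ⊆ {z : ℂ | 3 < ‖z‖} from fun z hz => hz.1.1),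
      ← integral_indicator hA, ← Complex.integral_comp_polarCoord_symm (A.indicator w)]
    have h2 : Set.EqOn (fun p : ℝ × ℝ => p.1 • (A.indicator w) (Complex.polarCoord.symm p))
        (T.indicator g) _root_.polarCoord.target := by
      intro p hp
      rw [_root_.polarCoord_target] at hp
      have hp1 : 0 < p.1 := hp.1
      have hp2 : p.2 ∈ Set.Ioo (-Real.pi) Real.pi := hp.2
      have habs : ‖Complex.polarCoord.symm p‖ = p.1 := by
        rw [Complex.norm_polarCoord_symm, abs_of_pos hp1]
      have harg : Complex.arg (Complex.polarCoord.symm p) = p.2 := by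
        rw [Complex.polarCoord_symm_apply, Complex.ofReal_cos, Complex.ofReal_sin,
          Complex.arg_real_mul _ hp1, Complex.arg_cos_add_sin_mul_I ⟨hp2.1, hp2.2.le⟩]
      have hmem : Complex.polarCoord.symm p ∈ A ↔ p ∈ T := by
        simp only [hA_def, hT_def, Set.mem_setOf_eq, Set.mem_prod, habs, harg]
      by_cases hpT : p ∈ T
      · have hzA := hmem.2 hpT
        simp only [Set.indicator_of_mem hzA, Set.indicator_of_mem hpT]
        have hr0 : (p.1 : ℂ) ≠ 0 := Complex.ofReal_ne_zero.2 hp1.ne'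
        have hz : Complex.polarCoord.symm p = (p.1 : ℂ) * Complex.exp ((p.2 : ℂ) * I) := by
          rw [Complex.polarCoord_symm_apply, Complex.exp_mul_I, ← Complex.ofReal_cos,
            ← Complex.ofReal_sin]
        have hconj : (starRingEnd ℂ) (Complex.polarCoord.symm p)
            = (p.1 : ℂ) * Complex.exp (-((p.2 : ℂ) * I)) := by
          rw [hz, map_mul, ← Complex.exp_conj, Complex.conj_ofReal, map_mul,
            Complex.conj_ofReal, Complex.conj_I, mul_neg]
        show p.1 • w (Complex.polarCoord.symm p) = g p
        rw [hw_def]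
        simp only
        rw [hconj, hz, mul_pow, mul_pow, ← Complex.exp_nat_mul, ← Complex.exp_nat_mul]
        have hkey : (((m + 2 : ℕ) : ℂ)) * -((p.2 : ℂ) * I)
            = -(((m + 2 : ℕ) : ℂ) * ((p.2 : ℂ) * I)) := by ring
        rw [hkey, Complex.exp_neg, hg_def]
        simp only
        rw [Complex.real_smul]
        have hexp : Complex.exp ((m : ℂ) * ((p.2 : ℂ) * I))
            * Complex.exp (((m + 2 : ℕ) : ℂ) * ((p.2 : ℂ) * I))
            = Complex.exp ((((2 * m + 2 : ℝ) * p.2 : ℝ) : ℂ) * I) := by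
          rw [← Complex.exp_add]
          congr 1
          push_cast
          ring
        have hene : Complex.exp (((m + 2 : ℕ) : ℂ) * ((p.2 : ℂ) * I)) ≠ 0 :=
          Complex.exp_ne_zero _
        rw [← hexp]
        field_simp
        rw [one_div, Complex.ofReal_inv, eq_mul_inv_iff_mul_eq₀ hr0]
        ring
      · simp only [Set.indicator_of_notMem hpT,
          Set.indicator_of_notMem (fun h => hpT (hmem.1 h)), smul_zero]
    rw [setIntegral_congr_fun _root_.polarCoord.open_target.measurableSet h2,
      setIntegral_indicator hT, Set.inter_eq_self_of_subset_right]
    rw [_root_.polarCoord_target, hT_def]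
    exact Set.prod_mono (Set.Ioo_subset_Ioi_self.trans (Set.Ioi_subset_Ioi (by norm_num)))
      (Set.Ioo_subset_Ioo (by linarith) (by linarith))
  -- integrability of g on T
  have hgmeas : AEStronglyMeasurable g (volume.restrict T) := by
    refine Measurable.aestronglyMeasurable ?_
    apply Measurable.mul
    · exact Complex.measurable_ofReal.comp measurable_fst.inv
    · exact Complex.continuous_exp.measurable.comp
        ((Complex.measurable_ofReal.comp (measurable_snd.const_mul _)).mul measurable_const)
  have hgnorm : ∀ p ∈ T, ‖g p‖ ≤ (3:ℝ)⁻¹ := by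
    intro p hp
    have hp1 : (3:ℝ) < p.1 := hp.1.1
    have : ‖g p‖ = |p.1⁻¹| := by
      rw [hg_def]
      simp only [norm_mul, Complex.norm_real, Real.norm_eq_abs,
        Complex.norm_exp_ofReal_mul_I, mul_one]
    rw [this, _root_.abs_of_nonneg (inv_nonneg.2 (by linarith))]
    rw [inv_le_inv₀ (by linarith) (by norm_num)]
    linarith
  have hgint : IntegrableOn g T volume := by
    refine Integrable.mono' (g := fun _ => (3:ℝ)⁻¹) (integrableOn_const hTvol.ne)
      hgmeas ?_
    exact (ae_restrict_iff' hT).2 (Filter.Eventually.of_forall hgnorm)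
  -- real part
  have hrefun : (fun p : ℝ × ℝ => (g p).re)
      = fun p => p.1⁻¹ * Real.cos ((2 * m + 2 : ℝ) * p.2) := by
    funext p
    rw [hg_def]
    simp only [Complex.re_ofReal_mul, Complex.exp_ofReal_mul_I_re]
  have hre : (∫ p in T, g p ∂volume).re
      = ∫ p in T, p.1⁻¹ * Real.cos ((2 * m + 2 : ℝ) * p.2) ∂volume := by
    rw [← hrefun]
    exact (integral_re hgint).symm
  -- lower bound on real part
  have hint2 : IntegrableOn (fun p : ℝ × ℝ => p.1⁻¹ * Real.cos ((2 * m + 2 : ℝ) * p.2)) T := by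
    rw [← hrefun]
    exact hgint.re
  have hint1 : IntegrableOn (fun p : ℝ × ℝ => (2 * p.1)⁻¹) T volume := by
    refine Integrable.mono' (g := fun _ => (6:ℝ)⁻¹) (integrableOn_const hTvol.ne)
      ((measurable_fst.const_mul 2).inv.aestronglyMeasurable) ?_
    refine (ae_restrict_iff' hT).2 (Filter.Eventually.of_forall fun p hp => ?_)
    have hp1 : (3:ℝ) < p.1 := hp.1.1
    rw [Real.norm_eq_abs, _root_.abs_of_nonneg (inv_nonneg.2 (by linarith))]
    rw [inv_le_inv₀ (by linarith) (by norm_num)]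
    linarith
  have hmono : (∫ p in T, (2 * p.1)⁻¹ ∂volume)
      ≤ ∫ p in T, p.1⁻¹ * Real.cos ((2 * m + 2 : ℝ) * p.2) ∂volume := by
    refine setIntegral_mono_on hint1 hint2 hT fun p hp => ?_
    have hp1 : (3:ℝ) < p.1 := hp.1.1
    have hp2 : |p.2| < a := abs_lt.2 ⟨hp.2.1, hp.2.2⟩
    have hx : |(2 * m + 2 : ℝ) * p.2| ≤ 1 := by
      rw [abs_mul, _root_.abs_of_nonneg (by positivity : (0:ℝ) ≤ (2 * m + 2 : ℝ))]
      calc (2 * m + 2 : ℝ) * |p.2| ≤ (2 * m + 2 : ℝ) * a :=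
            mul_le_mul_of_nonneg_left hp2.le (by positivity)
        _ = 1 := by
            rw [ha_def]
            rw [mul_inv_eq_one₀ (by positivity)]
            ring
    have hcos : (1:ℝ) / 2 ≤ Real.cos ((2 * m + 2 : ℝ) * p.2) := by
      have h1 := Real.one_sub_sq_div_two_le_cos (x := (2 * m + 2 : ℝ) * p.2)
      nlinarith [_root_.sq_abs ((2 * m + 2 : ℝ) * p.2), abs_nonneg ((2 * m + 2 : ℝ) * p.2)]
    have h0 : (0:ℝ) ≤ p.1⁻¹ := inv_nonneg.2 (by linarith)
    calc (2 * p.1)⁻¹ = p.1⁻¹ * (1 / 2) := by rw [mul_inv]; ring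
      _ ≤ p.1⁻¹ * Real.cos ((2 * m + 2 : ℝ) * p.2) := mul_le_mul_of_nonneg_left hcos h0
  -- Fubini computation
  have hfub : (∫ p in T, (2 * p.1)⁻¹ ∂volume) = C + 1 := by
    rw [hT_def, Measure.volume_eq_prod, setIntegral_prod]
    swap
    · rw [← Measure.volume_eq_prod]
      exact hint1
    have hinner : ∀ x : ℝ, (∫ _y in Set.Ioo (-a) a, (2 * x)⁻¹ ∂volume) = a * x⁻¹ := by
      intro x
      rw [setIntegral_const, Real.volume_real_Ioo_of_le (by linarith), smul_eq_mul,
        mul_inv]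
      ring
    simp_rw [hinner]
    rw [integral_const_mul, ← MeasureTheory.integral_Ioc_eq_integral_Ioo,
      ← intervalIntegral.integral_of_le hR3.le,
      integral_inv_of_pos (by norm_num) hR0, hR_def,
      mul_div_cancel_left₀ _ (by norm_num : (3:ℝ) ≠ 0), Real.log_exp,
      mul_div_cancel₀ _ ha.ne']
  rw [hEq]
  calc C < C + 1 := lt_add_one C
    _ = ∫ p in T, (2 * p.1)⁻¹ ∂volume := hfub.symm
    _ ≤ ∫ p in T, p.1⁻¹ * Real.cos ((2 * m + 2 : ℝ) * p.2) ∂volume := hmono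
    _ = (∫ p in T, g p ∂volume).re := hre.symm
    _ ≤ ‖∫ p in T, g p ∂volume‖ := Complex.re_le_norm _
end
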